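/- arXiv:1708.07753 — 4 statements merged into one kernel-verified Lean document; each statement's English description precedes it below -/
import Mathlib

section
/- Let V be a real inner product space with a skew-adjoint complex structure R (R² = -id, ⟨Rx,Ry⟩ = ⟨x,y⟩). Let W ⊆ V be a subspace with orthogonal decomposition W = D₁ ⊕ D₂ where R(D₁) = D₁ and R(D₂) ⊆ W^⊥. Let μ be the orthogonal complement of R(D₂) in W^⊥. Then μ is R-invariant: R(μ) ⊆ μ. -/
open RealInnerProductSpace

/-- μ, the orthogonal complement of R(D₂) in W^⊥, is R-invariant. -/
theorem stmt2 {V : Type*} [NormedAddCommGroup V] [InnerProductSpace ℝ V]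
    (R : V →ₗ[ℝ] V)
    (hR2 : ∀ x, R (R x) = -x)
    (hRiso : ∀ x y, ⟪R x, R y⟫ = ⟪x, y⟫)
    (W D₁ D₂ : Submodule ℝ V)
    (hW : D₁ ⊔ D₂ = W)
    (horth : ∀ x ∈ D₁, ∀ y ∈ D₂, ⟪x, y⟫ = 0)
    (hD1 : D₁.map R = D₁)
    (hD2 : D₂.map R ≤ Wᗮ) :
    (Wᗮ ⊓ (D₂.map R)ᗮ).map R ≤ Wᗮ ⊓ (D₂.map R)ᗮ := by
  have skew : ∀ x y : V, ⟪R x, y⟫ = -⟪x, R y⟫ := by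
    intro x y
    have h := hRiso x (R y)
    rw [hR2, inner_neg_right] at h
    linarith
  rintro _ ⟨z, ⟨hzW, hzD⟩, rfl⟩
  have hD1W : D₁ ≤ W := hW ▸ le_sup_left
  have hD2W : D₂ ≤ W := hW ▸ le_sup_right
  constructor
  · intro w hw
    rw [← hW] at hw
    rcases Submodule.mem_sup.mp hw with ⟨d₁, hd₁, d₂, hd₂, rfl⟩
    have hRd₁ : R d₁ ∈ D₁ := hD1 ▸ Submodule.mem_map_of_mem hd₁
    have h1 : ⟪d₁, R z⟫ = 0 := by
      rw [real_inner_comm, skew, real_inner_comm]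
      rw [hzW (R d₁) (hD1W hRd₁)]
      ring
    have h2 : ⟪d₂, R z⟫ = 0 := by
      rw [real_inner_comm, skew, real_inner_comm]
      rw [hzD (R d₂) (Submodule.mem_map_of_mem hd₂)]
      ring
    rw [inner_add_left, h1, h2, add_zero]
  · rintro _ ⟨d₂, hd₂, rfl⟩
    rw [hRiso, hzW d₂ (hD2W hd₂)]
end

section
/- Let V be a real inner product space with a skew-adjoint complex structure R, W ⊆ V a subspace with W = D₁ ⊕ D₂ (orthogonal), R(D₁) = D₁, R(D₂) ⊆ W^⊥, and μ the orthogonal complement of R(D₂) in W^⊥. For x ∈ W write Rx = φx + ωx with φx ∈ W and ωx ∈ W^⊥. Then φx ∈ D₁ and ωx ∈ R(D₂) for every x ∈ W. -/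
open RealInnerProductSpace

/-- for x ∈ W, writing Rx = φx + ωx with φx ∈ W and ωx ∈ W^⊥,
one has φx ∈ D₁ and ωx ∈ R(D₂). -/
theorem stmt3 {V : Type*} [NormedAddCommGroup V] [InnerProductSpace ℝ V]
    (R : V →ₗ[ℝ] V)
    (hR2 : ∀ x, R (R x) = -x)
    (hRiso : ∀ x y, ⟪R x, R y⟫ = ⟪x, y⟫)
    (W D₁ D₂ : Submodule ℝ V)
    (hW : D₁ ⊔ D₂ = W)
    (horth : ∀ x ∈ D₁, ∀ y ∈ D₂, ⟪x, y⟫ = 0)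
    (hD1 : D₁.map R = D₁)
    (hD2 : D₂.map R ≤ Wᗮ) :
    ∀ x ∈ W, ∀ p q : V, p ∈ W → q ∈ Wᗮ → R x = p + q →
      p ∈ D₁ ∧ q ∈ D₂.map R := by
  intro x hx p q hp hq hpq
  rw [← hW] at hx
  obtain ⟨a, ha, b, hb, rfl⟩ := Submodule.mem_sup.mp hx
  have hRa : R a ∈ D₁ := hD1 ▸ Submodule.mem_map_of_mem ha
  have hRb : R b ∈ D₂.map R := Submodule.mem_map_of_mem hb
  have hRaW : R a ∈ W := hW ▸ Submodule.mem_sup_left hRa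
  have hRbW : R b ∈ Wᗮ := hD2 hRb
  have hsum : R a + R b = p + q := by rw [← map_add]; exact hpq
  have hdiff : p - R a ∈ W := W.sub_mem hp hRaW
  have hdiff' : p - R a ∈ Wᗮ := by
    have : p - R a = R b - q :=
      sub_eq_sub_iff_add_eq_add.mpr (by rw [add_comm (R b)]; exact hsum.symm)
    rw [this]; exact Wᗮ.sub_mem hRbW hq
  have hzero : p - R a = 0 := by
    have := (Submodule.orthogonal_disjoint W).le_bot ⟨hdiff, hdiff'⟩
    simpa using this
  have hpa : p = R a := sub_eq_zero.mp hzero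
  have hqb : q = R b := by
    have h := hsum; rw [hpa] at h; exact (add_left_cancel h).symm
  exact ⟨hpa ▸ hRa, hqb ▸ hRb⟩
end

section
/- Let V be a real inner product space with a skew-adjoint complex structure R, W ⊆ V with W = D₁ ⊕ D₂ (orthogonal), R(D₁) = D₁, R(D₂) ⊆ W^⊥. For z ∈ W^⊥ write Rz = Bz + Cz with Bz ∈ W and Cz ∈ W^⊥. Then Bz ∈ D₂, and ⟨Cz, Rv⟩ = 0 for all z ∈ W^⊥ and v ∈ D₂ (i.e., Cz lies in the orthogonal complement μ of R(D₂) in W^⊥). -/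
open RealInnerProductSpace

/-- for z ∈ W^⊥, writing Rz = Bz + Cz with Bz ∈ W and Cz ∈ W^⊥,
one has Bz ∈ D₂ and ⟨Cz, Rv⟩ = 0 for all v ∈ D₂. -/
theorem stmt4 {V : Type*} [NormedAddCommGroup V] [InnerProductSpace ℝ V]
    (R : V →ₗ[ℝ] V)
    (hR2 : ∀ x, R (R x) = -x)
    (hRiso : ∀ x y, ⟪R x, R y⟫ = ⟪x, y⟫)
    (W D₁ D₂ : Submodule ℝ V)
    (hW : D₁ ⊔ D₂ = W)
    (horth : ∀ x ∈ D₁, ∀ y ∈ D₂, ⟪x, y⟫ = 0)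
    (hD1 : D₁.map R = D₁)
    (hD2 : D₂.map R ≤ Wᗮ) :
    ∀ z ∈ Wᗮ, ∀ b c : V, b ∈ W → c ∈ Wᗮ → R z = b + c →
      b ∈ D₂ ∧ ∀ v ∈ D₂, ⟪c, R v⟫ = 0 := by
  intro z hz b c hb hc hsum
  -- key: ⟨b, x⟩ = 0 for all x ∈ D₁
  have hbx : ∀ x ∈ D₁, ⟪b, x⟫ = 0 := by
    intro x hx
    have hRx : R x ∈ D₁ := hD1 ▸ Submodule.mem_map_of_mem hx
    have hRxW : R x ∈ W := hW ▸ Submodule.mem_sup_left hRx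
    have h1 : ⟪R z, x⟫ = 0 := by
      have h := hRiso (R z) x
      rw [hR2, inner_neg_left] at h
      rw [← h, real_inner_comm, hz (R x) hRxW, neg_zero]
    have h2 : ⟪c, x⟫ = 0 := by
      have := hc x (hW ▸ Submodule.mem_sup_left hx)
      rwa [real_inner_comm] at this
    have : ⟪b + c, x⟫ = 0 := hsum ▸ h1
    rw [inner_add_left, h2, add_zero] at this
    exact this
  constructor
  · -- b ∈ D₂
    have hbW : b ∈ W := hb
    rw [← hW] at hbW
    obtain ⟨b₁, hb₁, b₂, hb₂, rfl⟩ := Submodule.mem_sup.mp hbW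
    have h0 : ⟪b₁ + b₂, b₁⟫ = 0 := hbx b₁ hb₁
    have h12 : ⟪b₂, b₁⟫ = 0 := by
      rw [real_inner_comm]; exact horth b₁ hb₁ b₂ hb₂
    rw [inner_add_left, h12, add_zero, real_inner_self_eq_norm_sq] at h0
    have : b₁ = 0 := by
      have := sq_eq_zero_iff.mp h0
      simpa using this
    rw [this, zero_add]
    exact hb₂
  · intro v hv
    have hRv : R v ∈ Wᗮ := hD2 (Submodule.mem_map_of_mem hv)
    have h1 : ⟪R z, R v⟫ = 0 := by
      rw [hRiso]
      have := hz v (hW ▸ Submodule.mem_sup_right hv)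
      rwa [real_inner_comm] at this
    have h2 : ⟪b, R v⟫ = 0 := hRv b hb
    have : ⟪b + c, R v⟫ = 0 := hsum ▸ h1
    rw [inner_add_left, h2, zero_add] at this
    exact this
end

section
/- Let V be a real inner product space with a skew-adjoint complex structure R and subspaces as above (W = D₁ ⊕ D₂, R(D₁) = D₁, R(D₂) ⊆ W^⊥). With B : W^⊥ → W the W-component of R, φ : W → W the W-component of R restricted to W, we have φ ∘ B = 0, i.e., φ(Bz) = 0 for every z ∈ W^⊥. -/
open RealInnerProductSpace

/-- φ ∘ B = 0, i.e. the W-component of R(Bz) vanishes for every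
z ∈ W^⊥. -/
theorem stmt5 {V : Type*} [NormedAddCommGroup V] [InnerProductSpace ℝ V]
    (R : V →ₗ[ℝ] V)
    (hR2 : ∀ x, R (R x) = -x)
    (hRiso : ∀ x y, ⟪R x, R y⟫ = ⟪x, y⟫)
    (W D₁ D₂ : Submodule ℝ V)
    (hW : D₁ ⊔ D₂ = W)
    (horth : ∀ x ∈ D₁, ∀ y ∈ D₂, ⟪x, y⟫ = 0)
    (hD1 : D₁.map R = D₁)
    (hD2 : D₂.map R ≤ Wᗮ) :
    ∀ z ∈ Wᗮ, ∀ b c : V, b ∈ W → c ∈ Wᗮ → R z = b + c →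
      ∀ p q : V, p ∈ W → q ∈ Wᗮ → R b = p + q → p = 0 := by
  intro z hz b c hb hc hRz p q hp hq hRb
  have hD1W : D₁ ≤ W := hW ▸ le_sup_left
  have hD2W : D₂ ≤ W := hW ▸ le_sup_right
  -- general: ⟪R u, w⟫ = -⟪u, R w⟫
  have hskew : ∀ u w : V, ⟪R u, w⟫ = -⟪u, R w⟫ := by
    intro u w
    have := hRiso u (R w)
    rw [hR2 w] at this
    rw [← this]
    simp [inner_neg_right]
  have key : ∀ w ∈ W, ⟪p, w⟫ = 0 := by
    have h1 : ∀ w ∈ D₁, ⟪p, w⟫ = 0 := by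
      intro w hw
      have hw' : w ∈ W := hD1W hw
      have hRw : R w ∈ D₁ := by
        rw [← hD1]; exact Submodule.mem_map_of_mem hw
      have hqw : ⟪q, w⟫ = 0 := by
        rw [real_inner_comm]; exact hq w hw'
      have hpq : ⟪p, w⟫ = ⟪R b, w⟫ := by
        rw [hRb, inner_add_left, hqw, add_zero]
      rw [hpq, hskew]
      have hb' : b = R z - c := by rw [hRz]; abel
      rw [hb', inner_sub_left, hRiso]
      have h1 : ⟪z, w⟫ = 0 := by rw [real_inner_comm]; exact hz w hw'
      have h2 : ⟪c, w⟫ = 0 := by rw [real_inner_comm]; exact hc w hw'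
      have h3 : ⟪c, R w⟫ = 0 := by
        rw [real_inner_comm]; exact hc (R w) (hD1W hRw)
      rw [h1, h3]; ring
    have h2 : ∀ w ∈ D₂, ⟪p, w⟫ = 0 := by
      intro w hw
      have hw' : w ∈ W := hD2W hw
      have hRw : R w ∈ Wᗮ := hD2 (Submodule.mem_map_of_mem hw)
      have hqw : ⟪q, w⟫ = 0 := by
        rw [real_inner_comm]; exact hq w hw'
      have hpq : ⟪p, w⟫ = ⟪R b, w⟫ := by
        rw [hRb, inner_add_left, hqw, add_zero]
      rw [hpq, hskew]
      have : ⟪b, R w⟫ = 0 := hRw b hb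
      rw [this]; ring
    intro w hw
    rw [← hW] at hw
    obtain ⟨x, hx, y, hy, rfl⟩ := Submodule.mem_sup.mp hw
    rw [inner_add_right, h1 x hx, h2 y hy, add_zero]
  have : ⟪p, p⟫ = 0 := key p hp
  exact inner_self_eq_zero.mp this
end
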